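/- Let f be a piecewise contracting interval map with D ⊂ X̃, x ∈ X̃ and i ∈ {1,...,N-1}. If c_i ∈ Δ_lr(x), then none of the sets ω(x) ∩ X̃, ω(d_i^+) ∩ X̃, ω(d_i^-) ∩ X̃ contains a periodic point of f. -/

import Mathlib

open Filter Topology Set

/-- A piecewise contracting interval map on `X = [c 0, c N]` with contraction pieces
`X_i` delimited by the points `c 0 < c 1 < … < c N`, contraction rate `lam ∈ (0,1)`,
and `fe i` the (unique) continuous `lam`-Lipschitz extension of `f` restricted to the
`i`-th piece to its closure `[c (i-1), c i]`. The pieces are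
`X_1 = [c 0, c 1)`, `X_i = (c (i-1), c i)` for `1 < i < N`, `X_N = (c (N-1), c N]`. -/
structure PCIM where
  N : ℕ
  hN : 2 ≤ N
  c : ℕ → ℝ
  lam : ℝ
  f : ℝ → ℝ
  fe : ℕ → ℝ → ℝ
  hc : StrictMonoOn c (Set.Iic N)
  hlam : lam ∈ Set.Ioo (0 : ℝ) 1
  hmap : Set.MapsTo f (Set.Icc (c 0) (c N)) (Set.Icc (c 0) (c N))
  hfe_lip : ∀ i, 1 ≤ i → i ≤ N →
    ∀ x ∈ Set.Icc (c (i - 1)) (c i), ∀ y ∈ Set.Icc (c (i - 1)) (c i),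
      |fe i x - fe i y| ≤ lam * |x - y|
  hfe_eq : ∀ i, 1 ≤ i → i ≤ N → ∀ x ∈ Set.Ioo (c (i - 1)) (c i), fe i x = f x
  hfe_left : fe 1 (c 0) = f (c 0)
  hfe_right : fe N (c N) = f (c N)

namespace PCIM

variable (P : PCIM)

/-- The phase space `X = [c 0, c N]`. -/
def X : Set ℝ := Set.Icc (P.c 0) (P.c P.N)

/-- The `i`-th contraction piece (`1 ≤ i ≤ N`). -/
def piece (i : ℕ) : Set ℝ :=
  Set.Ioo (P.c (i - 1)) (P.c i)
    ∪ (if i = 1 then {P.c 0} else (∅ : Set ℝ))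
    ∪ (if i = P.N then {P.c P.N} else (∅ : Set ℝ))

/-- `Δ`, the set of interior boundary points of the pieces. -/
def Δ : Set ℝ := {y | ∃ i, 1 ≤ i ∧ i < P.N ∧ y = P.c i}

/-- `X̃ = ⋂ n, f⁻ⁿ(X \ Δ)`: points whose whole forward orbit stays in `X` and avoids `Δ`. -/
def Xt : Set ℝ := {x | ∀ n : ℕ, P.f^[n] x ∈ P.X \ P.Δ}

/-- Forward orbit of `x`. -/
def orbit (x : ℝ) : Set ℝ := Set.range fun n : ℕ => P.f^[n] x

/-- The ω-limit set of `x`: limits of subsequences of the forward orbit. -/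
def omega (x : ℝ) : Set ℝ :=
  {y | ∃ φ : ℕ → ℕ, StrictMono φ ∧
    Filter.Tendsto (fun n => P.f^[φ n] x) Filter.atTop (nhds y)}

/-- `d_i^- = f_i (c_i)`, the left lateral limit of `f` at `c i`. -/
def dminus (i : ℕ) : ℝ := P.fe i (P.c i)

/-- `d_i^+ = f_{i+1} (c_i)`, the right lateral limit of `f` at `c i`. -/
def dplus (i : ℕ) : ℝ := P.fe (i + 1) (P.c i)

/-- `D⁻ = {d_1^-, …, d_{N-1}^-}`. -/
def Dminus : Set ℝ := {y | ∃ i, 1 ≤ i ∧ i < P.N ∧ y = P.dminus i}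

/-- `D⁺ = {d_1^+, …, d_{N-1}^+}`. -/
def Dplus : Set ℝ := {y | ∃ i, 1 ≤ i ∧ i < P.N ∧ y = P.dplus i}

/-- `D`, the set of all one-sided limits of `f` at endpoints of the pieces. -/
def D : Set ℝ := P.Dminus ∪ P.Dplus ∪ {P.fe 1 (P.c 0), P.fe P.N (P.c P.N)}

/-- `A` is pseudo-invariant: for every `x ∈ A` at least one one-sided limit of `f`
at `x` (i.e. some `fe i x` with `x` in the closure of the `i`-th piece) belongs to `A`. -/
def PseudoInvariant (A : Set ℝ) : Prop :=
  ∀ x ∈ A, ∃ i, 1 ≤ i ∧ i ≤ P.N ∧ x ∈ Set.Icc (P.c (i - 1)) (P.c i) ∧ P.fe i x ∈ A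

/-- `F_i(A) = closure (f (A ∩ X_i))`. -/
def Fmap (i : ℕ) (A : Set ℝ) : Set ℝ := closure (P.f '' (A ∩ P.piece i))

/-- For a word `w = [i_1, …, i_n]`, the set `F_{i_n} ∘ … ∘ F_{i_1} (X)`. -/
def atomOf (w : List ℕ) : Set ℝ := w.foldl (fun S i => P.Fmap i S) P.X

/-- `A` is an atom of generation `n`. -/
def IsAtomGen (n : ℕ) (A : Set ℝ) : Prop :=
  ∃ w : List ℕ, w.length = n ∧ (∀ i ∈ w, 1 ≤ i ∧ i ≤ P.N) ∧
    A = P.atomOf w ∧ A.Nonempty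

/-- `Lam n` is `Λ_{n+1}` of the paper: `Λ_1 = closure (f(X \ Δ))`,
`Λ_{n+1} = closure (f(Λ_n \ Δ))`. -/
def Lam (P : PCIM) : ℕ → Set ℝ
  | 0 => closure (P.f '' (P.X \ P.Δ))
  | n + 1 => closure (P.f '' (P.Lam n \ P.Δ))

/-- The attractor `Λ = ⋂_{n ≥ 1} Λ_n`. -/
def attractor : Set ℝ := ⋂ n : ℕ, P.Lam n

/-- `c i ∈ Δ_lr(x)`: the boundary point `c i` is left-right recurrently visited by the
orbit of `x`. -/
def lrVisited (x : ℝ) (i : ℕ) : Prop :=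
  1 ≤ i ∧ i < P.N ∧
  ∃ l r : ℕ → ℕ, StrictMono l ∧ StrictMono r ∧
    (∀ j, P.f^[l j] x ∈ P.piece i) ∧ (∀ j, P.f^[r j] x ∈ P.piece (i + 1)) ∧
    Filter.Tendsto (fun j => P.f^[l j] x) Filter.atTop (nhds (P.c i)) ∧
    Filter.Tendsto (fun j => P.f^[r j] x) Filter.atTop (nhds (P.c i))

/-- `c i ∈ Δ_lr`: `c i` is left-right recurrently visited by the orbit of some point
of `X̃`. -/
def inΔlr (i : ℕ) : Prop := ∃ x ∈ P.Xt, P.lrVisited x i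

/-- The set `Δ_lr ⊆ Δ`. -/
def ΔlrSet : Set ℝ := {y | ∃ i, P.inΔlr i ∧ y = P.c i}

/-- The relation `∼⁺` on `Δ_lr`: `c_i ∼⁺ c_j` iff `c_i = c_j` or
(`c_i ∈ Δ_lr(d_j^+)` and `c_j ∈ Δ_lr(d_i^+)`). -/
def simP (a b : ℝ) : Prop :=
  a = b ∨ ∃ i j, P.inΔlr i ∧ P.inΔlr j ∧ a = P.c i ∧ b = P.c j ∧
    P.lrVisited (P.dplus j) i ∧ P.lrVisited (P.dplus i) j

/-- The relation `≼⁺` (on representatives): `[c_i] ≼⁺ [c_j]` iff `[c_i] = [c_j]` or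
`c_i ∈ Δ_lr(d_j^+)`. -/
def preP (a b : ℝ) : Prop :=
  P.simP a b ∨ ∃ i j, P.inΔlr i ∧ P.inΔlr j ∧ a = P.c i ∧ b = P.c j ∧
    P.lrVisited (P.dplus j) i

/-- `[c i]` is a minimal class for the partial order `≼⁺`. -/
def MinimalClass (i : ℕ) : Prop :=
  P.inΔlr i ∧ ∀ j, P.inΔlr j → P.preP (P.c j) (P.c i) → P.simP (P.c j) (P.c i)

/-- `f` is injective on each contraction piece. -/
def InjPieces : Prop := ∀ i, 1 ≤ i → i ≤ P.N → Set.InjOn P.f (P.piece i)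

/-- `f` is (strictly) increasing on each contraction piece. -/
def IncrPieces : Prop := ∀ i, 1 ≤ i → i ≤ P.N → StrictMonoOn P.f (P.piece i)

/-- `x` is a periodic point of `f`. -/
def IsPeriodic (x : ℝ) : Prop := ∃ p : ℕ, 1 ≤ p ∧ P.f^[p] x = x

/-- `η` is the itinerary of `x`: `f^[n] x ∈ X_{η n}` for all `n`. -/
def IsItinerary (x : ℝ) (η : ℕ → ℕ) : Prop :=
  ∀ n, 1 ≤ η n ∧ η n ≤ P.N ∧ P.f^[n] x ∈ P.piece (η n)

end PCIM

/-- The word of length `n` of the sequence `η` starting at position `t`. -/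
def wordAt (η : ℕ → ℕ) (t n : ℕ) : List ℕ := (List.range n).map fun m => η (t + m)

/-- The complexity function of the sequence `η`: the number of distinct words of
length `n` occurring in `η`. -/
noncomputable def complexity (η : ℕ → ℕ) (n : ℕ) : ℕ := Set.ncard {w : List ℕ | ∃ t, w = wordAt η t n}

namespace PCIM

variable (P : PCIM)

lemma c_mono {a b : ℕ} (hab : a ≤ b) (hb : b ≤ P.N) : P.c a ≤ P.c b :=
  P.hc.monotoneOn (Set.mem_Iic.mpr (hab.trans hb)) (Set.mem_Iic.mpr hb) hab

lemma step {y : ℝ} (hy : y ∈ P.X \ P.Δ) :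
    ∃ δ > 0, ∀ z ∈ P.X \ P.Δ, |z - y| < δ → |P.f z - P.f y| ≤ P.lam * |z - y| := by
  classical
  have hN := P.hN
  obtain ⟨⟨hy0, hyN⟩, hyΔ⟩ := hy
  have hyne : ∀ j, 1 ≤ j → j < P.N → y ≠ P.c j := fun j h1 h2 h3 => hyΔ ⟨j, h1, h2, h3⟩
  obtain ⟨k, hk1, hkN, hylb, hyub, hcase⟩ :
      ∃ k, 1 ≤ k ∧ k ≤ P.N ∧ P.c (k-1) ≤ y ∧ y ≤ P.c k ∧ (k = 1 ∨ P.c (k-1) < y) := by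
    have hex : ∃ j, y ≤ P.c j := ⟨P.N, hyN⟩
    have hk0 : y ≤ P.c (Nat.find hex) := Nat.find_spec hex
    have hk0N : Nat.find hex ≤ P.N := Nat.find_le hyN
    rcases Nat.eq_zero_or_pos (Nat.find hex) with h0 | hpos
    · have hyc0 : y = P.c 0 := le_antisymm (by rw [← h0]; exact hk0) hy0
      exact ⟨1, le_refl _, by omega, by simpa using hy0,
        by rw [hyc0]; exact P.c_mono (by omega) (by omega), Or.inl rfl⟩
    · have hmin : ¬ y ≤ P.c (Nat.find hex - 1) := Nat.find_min hex (by omega)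
      exact ⟨Nat.find hex, hpos, hk0N, (not_le.mp hmin).le, hk0, Or.inr (not_le.mp hmin)⟩
  have hub' : k < P.N → y < P.c k := fun h => lt_of_le_of_ne hyub (hyne k hk1 h)
  have hfy : P.f y = P.fe k y := by
    rcases eq_or_lt_of_le hylb with heq | hlb
    · rcases hcase with h1 | h1
      · subst h1; rw [← heq]; exact P.hfe_left.symm
      · exact absurd heq (ne_of_lt h1)
    · rcases eq_or_lt_of_le hyub with heq2 | hub
      · by_cases hk' : k = P.N
        · subst hk'; rw [heq2]; exact P.hfe_right.symm
        · exact absurd heq2 (hyne k hk1 (lt_of_le_of_ne hkN hk'))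
      · exact (P.hfe_eq k hk1 hkN y ⟨hlb, hub⟩).symm
  have hne : (Finset.Ico 1 P.N).Nonempty := by rw [Finset.nonempty_Ico]; omega
  set δ := (Finset.Ico 1 P.N).inf' hne (fun j => |y - P.c j|) with hδdef
  have hδpos : 0 < δ := by
    rw [Finset.lt_inf'_iff]
    intro j hj
    rw [Finset.mem_Ico] at hj
    exact abs_pos.mpr (sub_ne_zero.mpr (hyne j hj.1 hj.2))
  refine ⟨δ, hδpos, ?_⟩
  rintro z ⟨⟨hz0, hzN⟩, hzΔ⟩ hzy
  have hzne : ∀ j, 1 ≤ j → j < P.N → z ≠ P.c j := fun j h1 h2 h3 => hzΔ ⟨j, h1, h2, h3⟩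
  have hzlb : P.c (k-1) ≤ z := by
    by_cases hk1' : k = 1
    · subst hk1'; simpa using hz0
    · have hmem : k - 1 ∈ Finset.Ico 1 P.N := Finset.mem_Ico.mpr ⟨by omega, by omega⟩
      have hlb : P.c (k-1) < y := by
        rcases hcase with h | h
        · omega
        · exact h
      have hδle : δ ≤ |y - P.c (k-1)| := Finset.inf'_le _ hmem
      have habs : |y - P.c (k-1)| = y - P.c (k-1) := abs_of_pos (by linarith)
      have h2 : |z - y| < y - P.c (k-1) := by rw [habs] at hδle; linarith
      have h3 := abs_lt.mp h2
      linarith [h3.1]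
  have hzub : z ≤ P.c k := by
    by_cases hk' : k = P.N
    · subst hk'; exact hzN
    · have hkn : k < P.N := lt_of_le_of_ne hkN hk'
      have hmem : k ∈ Finset.Ico 1 P.N := Finset.mem_Ico.mpr ⟨hk1, hkn⟩
      have hδle : δ ≤ |y - P.c k| := Finset.inf'_le _ hmem
      have hyk : y < P.c k := hub' hkn
      have habs : |y - P.c k| = P.c k - y := by rw [abs_sub_comm]; exact abs_of_pos (by linarith)
      have h3 := abs_lt.mp hzy
      rw [habs] at hδle
      linarith [h3.2]
  have hfz : P.f z = P.fe k z := by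
    rcases eq_or_lt_of_le hzlb with heq | hlb
    · by_cases hk1' : k = 1
      · subst hk1'; rw [← heq]; exact P.hfe_left.symm
      · exact absurd heq.symm (hzne (k-1) (by omega) (by omega))
    · rcases eq_or_lt_of_le hzub with heq2 | hub
      · by_cases hk' : k = P.N
        · subst hk'; rw [heq2]; exact P.hfe_right.symm
        · exact absurd heq2 (hzne k hk1 (lt_of_le_of_ne hkN hk'))
      · exact (P.hfe_eq k hk1 hkN z ⟨hlb, hub⟩).symm
  rw [hfz, hfy]
  exact P.hfe_lip k hk1 hkN z ⟨hzlb, hzub⟩ y ⟨hylb, hyub⟩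

lemma iter_step {y : ℝ} (hy : ∀ n, P.f^[n] y ∈ P.X \ P.Δ) (m : ℕ) :
    ∃ δ > 0, ∀ z, (∀ n, P.f^[n] z ∈ P.X \ P.Δ) → |z - y| < δ →
      |P.f^[m] z - P.f^[m] y| ≤ P.lam ^ m * |z - y| := by
  induction m with
  | zero => exact ⟨1, one_pos, fun z _ _ => by simp⟩
  | succ m ih =>
    obtain ⟨δm, hδm, hm⟩ := ih
    obtain ⟨δ', hδ', hs⟩ := P.step (hy m)
    refine ⟨min δm δ', lt_min hδm hδ', fun z hz hzy => ?_⟩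
    have h1 := hm z hz (lt_of_lt_of_le hzy (min_le_left _ _))
    have hlam1 : P.lam ^ m ≤ 1 := pow_le_one₀ P.hlam.1.le P.hlam.2.le
    have h2 : |P.f^[m] z - P.f^[m] y| < δ' := by
      have hb : P.lam ^ m * |z - y| ≤ |z - y| := by
        nlinarith [abs_nonneg (z - y)]
      have h3 := lt_of_lt_of_le hzy (min_le_right _ _)
      linarith
    have h3 := hs (P.f^[m] z) (hz m) h2
    rw [Function.iterate_succ_apply', Function.iterate_succ_apply']
    calc |P.f (P.f^[m] z) - P.f (P.f^[m] y)| ≤ P.lam * |P.f^[m] z - P.f^[m] y| := h3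
      _ ≤ P.lam * (P.lam ^ m * |z - y|) := mul_le_mul_of_nonneg_left h1 P.hlam.1.le
      _ = P.lam ^ (m+1) * |z - y| := by ring

lemma omega_iff {x y : ℝ} :
    y ∈ P.omega x ↔ ∀ ε > 0, ∃ᶠ n in Filter.atTop, |P.f^[n] x - y| < ε := by
  constructor
  · rintro ⟨φ, hφ, ht⟩ ε hε
    have hev : ∀ᶠ n in Filter.atTop, |P.f^[φ n] x - y| < ε := by
      have := Metric.tendsto_nhds.mp ht ε hε
      simpa [Real.dist_eq] using this
    exact hφ.tendsto_atTop.frequently hev.frequently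
  · intro h
    have hfreq : ∀ n : ℕ, ∃ᶠ k in Filter.atTop, |P.f^[k] x - y| < 1 / (n + 1) := fun n =>
      h _ (by positivity)
    obtain ⟨φ, hφ, hP⟩ := Filter.extraction_forall_of_frequently hfreq
    refine ⟨φ, hφ, ?_⟩
    rw [Metric.tendsto_atTop]
    intro ε hε
    obtain ⟨n, hn⟩ := exists_nat_one_div_lt hε
    refine ⟨n, fun m hm => ?_⟩
    rw [Real.dist_eq]
    calc |P.f^[φ m] x - y| < 1 / (m + 1) := hP m
      _ ≤ 1 / (n + 1) := by
          apply one_div_le_one_div_of_le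
          · positivity
          · exact_mod_cast Nat.succ_le_succ hm
      _ < ε := hn

lemma no_periodic (x : ℝ) (hx : x ∈ P.Xt) {i : ℕ} (hi : P.lrVisited x i) :
    ∀ q ∈ P.omega x ∩ P.Xt, ¬ P.IsPeriodic q := by
  rintro q ⟨hqω, hqX⟩ ⟨p, hp1, hpq⟩
  obtain ⟨hi1, hiN, l, r, hl, hr, hlp, hrp, hlt, hrt⟩ := hi
  have hqorb : ∀ s, P.c i ≠ P.f^[s] q := by
    intro s h
    exact (hqX s).2 ⟨i, hi1, hiN, h.symm⟩
  classical
  choose δf hδpos hδ using fun s => P.iter_step hqX s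
  have hne1 : (Finset.range (p+1)).Nonempty := ⟨0, by simp⟩
  set δ := (Finset.range (p+1)).inf' hne1 δf with hδdef
  have hδ0 : 0 < δ := by rw [Finset.lt_inf'_iff]; exact fun s _ => hδpos s
  obtain ⟨φ, hφ, hφt⟩ := hqω
  obtain ⟨n1, hn1⟩ := Metric.tendsto_atTop.mp hφt δ hδ0
  set n0 := φ n1 with hn0def
  set z := P.f^[n0] x with hzdef
  have hz : |z - q| < δ := by
    have := hn1 n1 le_rfl
    rwa [Real.dist_eq] at this
  have hzX : ∀ n, P.f^[n] z ∈ P.X \ P.Δ := fun n => by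
    rw [hzdef, ← Function.iterate_add_apply]; exact hx (n + n0)
  have hlam01 : 0 < P.lam := P.hlam.1
  have hlam1 : P.lam < 1 := P.hlam.2
  have hlp1 : P.lam ^ p < 1 := pow_lt_one₀ hlam01.le hlam1 (by omega)
  have hlp0 : (0:ℝ) ≤ P.lam ^ p := pow_nonneg hlam01.le p
  have hblock : ∀ k, |P.f^[k * p] z - q| ≤ (P.lam ^ p) ^ k * |z - q| := by
    intro k
    induction k with
    | zero => simp
    | succ k ih =>
      have hlt' : |P.f^[k*p] z - q| < δ := by
        calc |P.f^[k*p] z - q| ≤ (P.lam^p)^k * |z - q| := ih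
          _ ≤ 1 * |z - q| :=
              mul_le_mul_of_nonneg_right (pow_le_one₀ hlp0 hlp1.le) (abs_nonneg _)
          _ < δ := by rw [one_mul]; exact hz
      have hδp : δ ≤ δf p := Finset.inf'_le _ (by simp)
      have hzkX : ∀ n, P.f^[n] (P.f^[k*p] z) ∈ P.X \ P.Δ := fun n => by
        rw [← Function.iterate_add_apply]; exact hzX (n + k*p)
      have h1 := hδ p (P.f^[k*p] z) hzkX (lt_of_lt_of_le hlt' hδp)
      rw [hpq] at h1
      have heq : P.f^[(k+1)*p] z = P.f^[p] (P.f^[k*p] z) := by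
        rw [show (k+1)*p = p + k*p from by ring]
        exact Function.iterate_add_apply _ _ _ _
      rw [heq]
      calc |P.f^[p] (P.f^[k*p] z) - q| ≤ P.lam^p * |P.f^[k*p] z - q| := h1
        _ ≤ P.lam^p * ((P.lam^p)^k * |z - q|) := mul_le_mul_of_nonneg_left ih hlp0
        _ = (P.lam^p)^(k+1) * |z - q| := by ring
  have hgen : ∀ n, |P.f^[n] z - P.f^[n % p] q| ≤ (P.lam^p)^(n / p) * |z - q| := by
    intro n
    have hδs : δ ≤ δf (n % p) := Finset.inf'_le _ (by
      simp only [Finset.mem_range]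
      have := Nat.mod_lt n (show 0 < p by omega)
      omega)
    have hkX : ∀ m, P.f^[m] (P.f^[n/p*p] z) ∈ P.X \ P.Δ := fun m => by
      rw [← Function.iterate_add_apply]; exact hzX _
    have hlt' : |P.f^[n/p*p] z - q| < δf (n % p) := by
      refine lt_of_lt_of_le ?_ hδs
      calc |P.f^[n/p*p] z - q| ≤ (P.lam^p)^(n/p) * |z - q| := hblock _
        _ ≤ 1 * |z - q| :=
            mul_le_mul_of_nonneg_right (pow_le_one₀ hlp0 hlp1.le) (abs_nonneg _)
        _ < δ := by rw [one_mul]; exact hz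
    have h1 := hδ (n % p) (P.f^[n/p*p] z) hkX hlt'
    have heq : P.f^[n] z = P.f^[n % p] (P.f^[n/p*p] z) := by
      conv_lhs => rw [← Nat.mod_add_div' n p]
      exact Function.iterate_add_apply _ _ _ _
    rw [heq]
    calc |P.f^[n%p] (P.f^[n/p*p] z) - P.f^[n%p] q|
        ≤ P.lam^(n%p) * |P.f^[n/p*p] z - q| := h1
      _ ≤ 1 * ((P.lam^p)^(n/p) * |z - q|) := by
          apply mul_le_mul (pow_le_one₀ hlam01.le hlam1.le) (hblock _) (abs_nonneg _) zero_le_one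
      _ = (P.lam^p)^(n/p) * |z - q| := one_mul _
  have hnep : (Finset.range p).Nonempty := ⟨0, by simp; omega⟩
  set ε := (Finset.range p).inf' hnep (fun s => |P.c i - P.f^[s] q|) with hεdef
  have hε0 : 0 < ε := by
    rw [Finset.lt_inf'_iff]
    exact fun s _ => abs_pos.mpr (sub_ne_zero.mpr (hqorb s))
  have hlatop := hl.tendsto_atTop
  have hev1 : ∀ᶠ j in Filter.atTop, n0 ≤ l j := hlatop.eventually_ge_atTop n0
  have hG : ∀ᶠ j in Filter.atTop,
      ε ≤ |P.c i - P.f^[l j] x| + (P.lam^p)^((l j - n0)/p) * |z - q| := by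
    filter_upwards [hev1] with j hj
    have heq : P.f^[l j] x = P.f^[l j - n0] z := by
      have h := Function.iterate_add_apply P.f (l j - n0) n0 x
      rw [show l j - n0 + n0 = l j from by omega] at h
      rw [hzdef]
      exact h
    have hs := hgen (l j - n0)
    have hεs : ε ≤ |P.c i - P.f^[(l j - n0) % p] q| :=
      Finset.inf'_le _ (Finset.mem_range.mpr (Nat.mod_lt _ (by omega)))
    calc ε ≤ |P.c i - P.f^[(l j - n0) % p] q| := hεs
      _ ≤ |P.c i - P.f^[l j] x| + |P.f^[l j] x - P.f^[(l j - n0)%p] q| := abs_sub_le _ _ _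
      _ ≤ |P.c i - P.f^[l j] x| + (P.lam^p)^((l j - n0)/p) * |z - q| := by
          rw [heq]
          exact add_le_add (le_refl _) hs
  have ht1 : Filter.Tendsto (fun j => |P.c i - P.f^[l j] x|) Filter.atTop (nhds 0) := by
    have := tendsto_iff_dist_tendsto_zero.mp hlt
    simpa [Real.dist_eq, abs_sub_comm] using this
  have ht2 : Filter.Tendsto (fun j => (P.lam^p)^((l j - n0)/p) * |z - q|)
      Filter.atTop (nhds 0) := by
    have h1 : Filter.Tendsto (fun j => l j - n0) Filter.atTop Filter.atTop := by
      apply Filter.tendsto_atTop_atTop.mpr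
      intro b
      obtain ⟨J, hJ⟩ := Filter.tendsto_atTop_atTop.mp hlatop (b + n0)
      exact ⟨J, fun j hj => by have := hJ j hj; omega⟩
    have h2 : Filter.Tendsto (fun m : ℕ => m / p) Filter.atTop Filter.atTop := by
      apply Filter.tendsto_atTop_atTop.mpr
      intro b
      exact ⟨b * p, fun m hm => (Nat.le_div_iff_mul_le (by omega)).mpr hm⟩
    have h3 := tendsto_pow_atTop_nhds_zero_of_lt_one hlp0 hlp1
    have h4 := (h3.comp (h2.comp h1)).mul_const |z - q|
    simpa [Function.comp] using h4
  have hfin := ge_of_tendsto (ht1.add ht2) hG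
  simp only [add_zero] at hfin
  linarith

lemma fplus_step {i : ℕ} (hi1 : 1 ≤ i) (hiN : i < P.N) {w : ℝ}
    (hw : w ∈ P.piece (i+1)) :
    |P.f w - P.dplus i| ≤ P.lam * |w - P.c i| := by
  have hi1N : i + 1 ≤ P.N := hiN
  have hsub : i + 1 - 1 = i := rfl
  have hkey : w ∈ Set.Icc (P.c i) (P.c (i+1)) ∧ P.f w = P.fe (i+1) w := by
    rcases hw with (hw | hw) | hw
    · rw [hsub] at hw
      exact ⟨Set.Ioo_subset_Icc_self hw, (P.hfe_eq (i+1) (by omega) hi1N w (by rw [hsub]; exact hw)).symm⟩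
    · rw [if_neg (by omega)] at hw
      exact absurd hw (Set.notMem_empty _)
    · by_cases hN' : i + 1 = P.N
      · rw [if_pos hN'] at hw
        rw [Set.mem_singleton_iff, ← hN'] at hw
        subst hw
        constructor
        · exact ⟨P.c_mono (by omega) hi1N, le_refl _⟩
        · rw [hN']
          exact P.hfe_right.symm
      · rw [if_neg hN'] at hw
        exact absurd hw (Set.notMem_empty _)
  obtain ⟨hwIcc, hfw⟩ := hkey
  have hlip := P.hfe_lip (i+1) (by omega) hi1N w (by rw [hsub]; exact hwIcc) (P.c i)
    (by rw [hsub]; exact ⟨le_refl _, P.c_mono (by omega) hi1N⟩)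
  rw [hfw]
  exact hlip

lemma fminus_step {i : ℕ} (hi1 : 1 ≤ i) (hiN : i < P.N) {w : ℝ}
    (hw : w ∈ P.piece i) :
    |P.f w - P.dminus i| ≤ P.lam * |w - P.c i| := by
  have hiN' : i ≤ P.N := hiN.le
  have hkey : w ∈ Set.Icc (P.c (i-1)) (P.c i) ∧ P.f w = P.fe i w := by
    rcases hw with (hw | hw) | hw
    · exact ⟨Set.Ioo_subset_Icc_self hw, (P.hfe_eq i hi1 hiN' w hw).symm⟩
    · by_cases h1' : i = 1
      · rw [if_pos h1'] at hw
        rw [Set.mem_singleton_iff] at hw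
        subst hw
        subst h1'
        exact ⟨⟨le_refl _, P.c_mono (by omega) (by omega)⟩, P.hfe_left.symm⟩
      · rw [if_neg h1'] at hw
        exact absurd hw (Set.notMem_empty _)
    · rw [if_neg (by omega)] at hw
      exact absurd hw (Set.notMem_empty _)
  obtain ⟨hwIcc, hfw⟩ := hkey
  have hlip := P.hfe_lip i hi1 hiN' w hwIcc (P.c i)
    ⟨P.c_mono (by omega) hiN', le_refl _⟩
  rw [hfw]
  exact hlip

lemma omega_subset {x d : ℝ} (hx : x ∈ P.Xt) (hd : d ∈ P.Xt) {u : ℕ → ℕ}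
    (hu : Filter.Tendsto u Filter.atTop Filter.atTop)
    (ht : Filter.Tendsto (fun j => P.f^[u j] x) Filter.atTop (nhds d)) :
    P.omega d ⊆ P.omega x := by
  intro y hy
  rw [P.omega_iff]
  intro ε hε
  rw [Filter.frequently_atTop]
  intro b
  obtain ⟨φ, hφ, hφt⟩ := hy
  obtain ⟨M, hM⟩ := Metric.tendsto_atTop.mp hφt (ε/2) (half_pos hε)
  set m := φ M with hmdef
  have hm : |P.f^[m] d - y| < ε/2 := by
    have := hM M le_rfl
    rwa [Real.dist_eq] at this
  obtain ⟨δ, hδ0, hδ⟩ := P.iter_step hd m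
  have hev : ∀ᶠ j in Filter.atTop, b ≤ u j ∧ |P.f^[u j] x - d| < min δ (ε/2) := by
    filter_upwards [hu.eventually_ge_atTop b,
      Metric.tendsto_nhds.mp ht (min δ (ε/2)) (lt_min hδ0 (half_pos hε))] with j h1 h2
    exact ⟨h1, by rwa [Real.dist_eq] at h2⟩
  obtain ⟨j, hj1, hj2⟩ := hev.exists
  refine ⟨m + u j, by omega, ?_⟩
  have hzX : ∀ n, P.f^[n] (P.f^[u j] x) ∈ P.X \ P.Δ := fun n => by
    rw [← Function.iterate_add_apply]; exact hx _
  have h1 := hδ (P.f^[u j] x) hzX (lt_of_lt_of_le hj2 (min_le_left _ _))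
  have h2 : |P.f^[m] (P.f^[u j] x) - P.f^[m] d| < ε/2 := by
    have hlam : P.lam ^ m ≤ 1 := pow_le_one₀ P.hlam.1.le P.hlam.2.le
    have hb : P.lam ^ m * |P.f^[u j] x - d| ≤ |P.f^[u j] x - d| := by
      nlinarith [abs_nonneg (P.f^[u j] x - d)]
    have h3 := lt_of_lt_of_le hj2 (min_le_right _ _)
    linarith
  rw [Function.iterate_add_apply]
  calc |P.f^[m] (P.f^[u j] x) - y|
      ≤ |P.f^[m] (P.f^[u j] x) - P.f^[m] d| + |P.f^[m] d - y| := abs_sub_le _ _ _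
    _ < ε/2 + ε/2 := add_lt_add h2 hm
    _ = ε := by ring

end PCIM

/-- If `D ⊆ X̃`, `x ∈ X̃` and `c i ∈ Δ_lr(x)`, then none of `ω(x) ∩ X̃`,
`ω(d_i^+) ∩ X̃`, `ω(d_i^-) ∩ X̃` contains a periodic point of `f`. -/
theorem stmt13 (P : PCIM) (hD : P.D ⊆ P.Xt) (x : ℝ) (hx : x ∈ P.Xt)
    (i : ℕ) (hi : P.lrVisited x i) :
    (∀ q ∈ P.omega x ∩ P.Xt, ¬ P.IsPeriodic q) ∧
      (∀ q ∈ P.omega (P.dplus i) ∩ P.Xt, ¬ P.IsPeriodic q) ∧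
      (∀ q ∈ P.omega (P.dminus i) ∩ P.Xt, ¬ P.IsPeriodic q) := by
  have main := P.no_periodic x hx hi
  obtain ⟨hi1, hiN, l, r, hl, hr, hlp, hrp, hlt, hrt⟩ := hi
  refine ⟨main, ?_, ?_⟩
  · have hdX : P.dplus i ∈ P.Xt := hD (Or.inl (Or.inr ⟨i, hi1, hiN, rfl⟩))
    have hu : Filter.Tendsto (fun j => r j + 1) Filter.atTop Filter.atTop :=
      Filter.tendsto_atTop_atTop.mpr fun b =>
        ⟨b, fun j hj => le_trans (le_trans hj hr.le_apply) (Nat.le_succ _)⟩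
    have htend : Filter.Tendsto (fun j => P.f^[r j + 1] x) Filter.atTop
        (nhds (P.dplus i)) := by
      apply tendsto_iff_dist_tendsto_zero.mpr
      refine squeeze_zero (g := fun j => P.lam * |P.f^[r j] x - P.c i|)
        (fun j => dist_nonneg) (fun j => ?_) ?_
      · rw [Real.dist_eq, Function.iterate_succ_apply']
        exact P.fplus_step hi1 hiN (hrp j)
      · have h5 := (tendsto_iff_dist_tendsto_zero.mp hrt).const_mul P.lam
        simpa [Real.dist_eq] using h5
    rintro q ⟨hq1, hq2⟩
    exact main q ⟨P.omega_subset hx hdX hu htend hq1, hq2⟩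
  · have hdX : P.dminus i ∈ P.Xt := hD (Or.inl (Or.inl ⟨i, hi1, hiN, rfl⟩))
    have hu : Filter.Tendsto (fun j => l j + 1) Filter.atTop Filter.atTop :=
      Filter.tendsto_atTop_atTop.mpr fun b =>
        ⟨b, fun j hj => le_trans (le_trans hj hl.le_apply) (Nat.le_succ _)⟩
    have htend : Filter.Tendsto (fun j => P.f^[l j + 1] x) Filter.atTop
        (nhds (P.dminus i)) := by
      apply tendsto_iff_dist_tendsto_zero.mpr
      refine squeeze_zero (g := fun j => P.lam * |P.f^[l j] x - P.c i|)
        (fun j => dist_nonneg) (fun j => ?_) ?_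
      · rw [Real.dist_eq, Function.iterate_succ_apply']
        exact P.fminus_step hi1 hiN (hlp j)
      · have h5 := (tendsto_iff_dist_tendsto_zero.mp hlt).const_mul P.lam
        simpa [Real.dist_eq] using h5
    rintro q ⟨hq1, hq2⟩
    exact main q ⟨P.omega_subset hx hdX hu htend hq1, hq2⟩
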